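/- Let V be a vector space of dimension at least 3 over F_q (q odd) with a nondegenerate symmetric bilinear form. Let ⟨p⟩ be a nondegenerate 1-dimensional subspace and l an elliptic (minus type) nondegenerate 2-dimensional subspace such that ⟨p⟩ + l is a nondegenerate 3-dimensional subspace. Then there exist at least (q−1)/2 elliptic 2-dimensional subspaces through ⟨p⟩ that intersect l in a nondegenerate 1-dimensional subspace. -/

import Mathlib

open Module

section CharSum

open Finset

variable {F : Type*} [Field F] [Fintype F] [DecidableEq F]

lemma sum_quadChar_sq_add (hF : ringChar F ≠ 2) {c : F} (hc : c ≠ 0) :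
    ∑ x : F, quadraticChar F (x ^ 2 + c) = -1 := by
  have key : ∀ y : F, ∑ x ∈ univ.filter (fun x : F => x ^ 2 = y),
      quadraticChar F (x ^ 2 + c) = (quadraticChar F y + 1) * quadraticChar F (y + c) := by
    intro y
    have h1 : ∑ x ∈ univ.filter (fun x : F => x ^ 2 = y),
        quadraticChar F (x ^ 2 + c) = ∑ _x ∈ univ.filter (fun x : F => x ^ 2 = y),
        quadraticChar F (y + c) := by
      apply Finset.sum_congr rfl
      intro x hx
      rw [(Finset.mem_filter.mp hx).2]
    rw [h1, Finset.sum_const, nsmul_eq_mul]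
    congr 1
    rw [← quadraticChar_card_sqrts hF y]
    congr 1
    rw [← Set.toFinset_setOf]
  calc ∑ x : F, quadraticChar F (x ^ 2 + c)
      = ∑ y : F, ∑ x ∈ univ.filter (fun x : F => x ^ 2 = y),
        quadraticChar F (x ^ 2 + c) := (Finset.sum_fiberwise _ _ _).symm
    _ = ∑ y : F, (quadraticChar F y + 1) * quadraticChar F (y + c) := by
        exact Finset.sum_congr rfl fun y _ => key y
    _ = ∑ y : F, quadraticChar F y * quadraticChar F (y + c)
        + ∑ y : F, quadraticChar F (y + c) := by
        rw [← Finset.sum_add_distrib]; apply Finset.sum_congr rfl; intros; ring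
    _ = -1 := by
        have h2 : ∑ y : F, quadraticChar F (y + c) = 0 := by
          have e2 := Fintype.sum_equiv (Equiv.addRight c)
            (fun y : F => quadraticChar F (y + c)) (fun z : F => quadraticChar F z)
            (fun y => rfl)
          rw [e2]
          exact quadraticChar_sum_zero hF
        have h3 : ∑ y : F, quadraticChar F y * quadraticChar F (y + c) = -1 := by
          have h4 : ∑ y : F, quadraticChar F y * quadraticChar F (y + c)
              = ∑ y ∈ univ \ {0}, quadraticChar F y * quadraticChar F (y + c) := by
            refine (Finset.sum_subset (Finset.subset_univ _) ?_).symm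
            intro x _ hx
            simp only [Finset.mem_sdiff, Finset.mem_univ, true_and, Finset.mem_singleton,
              not_not] at hx
            simp [hx]
          rw [h4]
          have h5 : ∀ y ∈ univ \ ({0} : Finset F),
              quadraticChar F y * quadraticChar F (y + c) = quadraticChar F (1 + c * y⁻¹) := by
            intro y hy
            have hy0 : y ≠ 0 := by simpa using (Finset.mem_sdiff.mp hy).2
            have : y + c = y * (1 + c * y⁻¹) := by field_simp
            rw [this, map_mul, ← mul_assoc, ← pow_two, quadraticChar_sq_one hy0, one_mul]
          rw [Finset.sum_congr rfl h5]
          have h6 : ∑ y ∈ univ \ ({0} : Finset F), quadraticChar F (1 + c * y⁻¹)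
              = ∑ z ∈ univ \ ({1} : Finset F), quadraticChar F z := by
            refine Finset.sum_nbij' (fun y => 1 + c * y⁻¹) (fun z => c * (z - 1)⁻¹)
              ?_ ?_ ?_ ?_ ?_
            · intro y hy
              have hy0 : y ≠ 0 := by simpa using (Finset.mem_sdiff.mp hy).2
              simp only [Finset.mem_sdiff, Finset.mem_univ, true_and, Finset.mem_singleton]
              intro h
              exact (mul_ne_zero hc (inv_ne_zero hy0)) (by
                have := h
                rwa [add_eq_left] at this)
            · intro z hz
              have hz1 : z ≠ 1 := by simpa using (Finset.mem_sdiff.mp hz).2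
              simp only [Finset.mem_sdiff, Finset.mem_univ, true_and, Finset.mem_singleton]
              exact mul_ne_zero hc (inv_ne_zero (sub_ne_zero.mpr hz1))
            · intro y hy
              have hy0 : y ≠ 0 := by simpa using (Finset.mem_sdiff.mp hy).2
              field_simp
              simp [hc]
            · intro z hz
              have hz1 : z ≠ 1 := by simpa using (Finset.mem_sdiff.mp hz).2
              have : z - 1 ≠ 0 := sub_ne_zero.mpr hz1
              field_simp
              ring
            · intros; rfl
          rw [h6]
          have h7 : ∑ z ∈ univ \ ({1} : Finset F), quadraticChar F z
              = (∑ z : F, quadraticChar F z) - quadraticChar F 1 := by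
            rw [Finset.sum_sdiff_eq_sub (Finset.subset_univ _)]
            simp
          rw [h7, quadraticChar_sum_zero hF]
          simp
        rw [h2, h3, add_zero]

lemma sum_quadChar_quadratic (hF : ringChar F ≠ 2) {a b c : F} (ha : a ≠ 0)
    (hΔ : b ^ 2 - 4 * a * c ≠ 0) :
    ∑ x : F, quadraticChar F (a * x ^ 2 + b * x + c) = - quadraticChar F a := by
  have h2 : (2 : F) ≠ 0 := Ring.two_ne_zero hF
  have h4 : (4 : F) ≠ 0 := by
    have : (4 : F) = 2 * 2 := by norm_num
    rw [this]; exact mul_ne_zero h2 h2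
  have ha2 : (4 : F) * a ^ 2 ≠ 0 := mul_ne_zero h4 (pow_ne_zero 2 ha)
  set d : F := (4 * a * c - b ^ 2) / (4 * a ^ 2) with hd_def
  have hd : d ≠ 0 := by
    apply div_ne_zero
    · intro h; apply hΔ; linear_combination -h
    · exact ha2
  have key : ∀ x : F, a * x ^ 2 + b * x + c = a * ((x + b / (2 * a)) ^ 2 + d) := by
    intro x
    have he : (2 * a) * (b / (2 * a)) = b := by field_simp
    have hdd : (4 * a ^ 2) * d = 4 * a * c - b ^ 2 := by rw [hd_def]; field_simp
    have expand : 4 * a ^ 2 * (a * ((x + b / (2 * a)) ^ 2 + d))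
        = 4 * a ^ 2 * (a * x ^ 2 + b * x + c) := by
      linear_combination (4 * a ^ 2 * x + a * (2 * a * (b / (2 * a)) + b)) * he + a * hdd
    have := mul_left_cancel₀ ha2 expand
    exact this.symm
  calc ∑ x : F, quadraticChar F (a * x ^ 2 + b * x + c)
      = ∑ x : F, quadraticChar F a * quadraticChar F ((x + b / (2 * a)) ^ 2 + d) := by
        apply Finset.sum_congr rfl; intro x _; rw [key x, map_mul]
    _ = quadraticChar F a * ∑ x : F, quadraticChar F ((x + b / (2 * a)) ^ 2 + d) := by
        rw [Finset.mul_sum]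
    _ = quadraticChar F a * ∑ u : F, quadraticChar F (u ^ 2 + d) := by
        congr 1
        exact Fintype.sum_equiv (Equiv.addRight (b / (2 * a)))
          (fun x : F => quadraticChar F ((x + b / (2 * a)) ^ 2 + d))
          (fun u : F => quadraticChar F (u ^ 2 + d)) (fun x => rfl)
    _ = - quadraticChar F a := by rw [sum_quadChar_sq_add hF hd]; ring

lemma count_quadChar_neg_one (hF : ringChar F ≠ 2) {a b c : F} (ha : a ≠ 0)
    (hΔ : b ^ 2 - 4 * a * c ≠ 0) :
    Fintype.card F - 1 ≤ 2 * ((univ.filter fun t : F =>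
        quadraticChar F (a * t ^ 2 + b * t + c) = -1).card
      + (if quadraticChar F a = -1 then 1 else 0)) := by
  set g : F → F := fun t => a * t ^ 2 + b * t + c with hg
  set np := (univ.filter fun t : F => quadraticChar F (g t) = 1).card with hnp
  set nm := (univ.filter fun t : F => quadraticChar F (g t) = -1).card with hnm
  set n0 := (univ.filter fun t : F => g t = 0).card with hn0
  have hsum : (np : ℤ) - nm = - quadraticChar F a := by
    have e1 : ∀ t : F, quadraticChar F (g t) =
        (if quadraticChar F (g t) = 1 then (1 : ℤ) else 0)
        - (if quadraticChar F (g t) = -1 then (1 : ℤ) else 0) := by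
      intro t
      by_cases h0 : g t = 0
      · rw [h0]; simp
      · rcases quadraticChar_dichotomy h0 with h | h <;> rw [h] <;> norm_num
    have e2 : ∑ t : F, quadraticChar F (g t) = (np : ℤ) - nm := by
      rw [Finset.sum_congr rfl (fun t _ => e1 t), Finset.sum_sub_distrib]
      simp [Finset.sum_boole, hnp, hnm]
    rw [← e2]
    exact sum_quadChar_quadratic hF ha hΔ
  have hn02 : n0 ≤ 2 := by
    by_contra hcon
    push_neg at hcon
    obtain ⟨x, y, z, hx, hy, hz, hxy, hxz, hyz⟩ := Finset.two_lt_card_iff.mp hcon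
    have gx : g x = 0 := (Finset.mem_filter.mp hx).2
    have gy : g y = 0 := (Finset.mem_filter.mp hy).2
    have gz : g z = 0 := (Finset.mem_filter.mp hz).2
    simp only [hg] at gx gy gz
    have h1 : a * (x + y) + b = 0 := by
      have hfac : (x - y) * (a * (x + y) + b) = 0 := by linear_combination gx - gy
      rcases mul_eq_zero.mp hfac with h | h
      · exact absurd (sub_eq_zero.mp h) hxy
      · exact h
    have h2 : a * (x + z) + b = 0 := by
      have hfac : (x - z) * (a * (x + z) + b) = 0 := by linear_combination gx - gz
      rcases mul_eq_zero.mp hfac with h | h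
      · exact absurd (sub_eq_zero.mp h) hxz
      · exact h
    have : y - z = 0 := by
      have hyz' : a * (y - z) = 0 := by linear_combination h1 - h2
      rcases mul_eq_zero.mp hyz' with h | h
      · exact absurd h ha
      · exact h
    exact hyz (sub_eq_zero.mp this)
  have hpart : np + (univ.filter fun t : F => ¬ quadraticChar F (g t) = 1).card
      = Fintype.card F := by
    rw [hnp]
    rw [Finset.card_filter_add_card_filter_not]
    exact Finset.card_univ
  have hsub : (univ.filter fun t : F => ¬ quadraticChar F (g t) = 1).card ≤ nm + n0 := by
    have : (univ.filter fun t : F => ¬ quadraticChar F (g t) = 1)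
        ⊆ (univ.filter fun t : F => quadraticChar F (g t) = -1)
          ∪ (univ.filter fun t : F => g t = 0) := by
      intro t ht
      simp only [Finset.mem_filter, Finset.mem_univ, true_and] at ht
      simp only [Finset.mem_union, Finset.mem_filter, Finset.mem_univ, true_and]
      by_cases h0 : g t = 0
      · exact Or.inr h0
      · rcases quadraticChar_dichotomy h0 with h | h
        · exact absurd h ht
        · exact Or.inl h
    calc _ ≤ _ := Finset.card_le_card this
      _ ≤ nm + n0 := Finset.card_union_le _ _
  rcases quadraticChar_dichotomy ha with hqa | hqa <;> rw [hqa] at hsum <;>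
    simp only [hqa] <;> norm_num <;> omega

end CharSum

/-- A subspace `W` is an *elliptic line* for the symmetric bilinear form `B` if it is
2-dimensional, nondegenerate, and anisotropic (contains no nonzero isotropic vector). -/
def IsEllipticLine {F V : Type*} [Field F] [AddCommGroup V] [Module F V]
    (B : LinearMap.BilinForm F V) (W : Submodule F V) : Prop :=
  finrank F W = 2 ∧ (B.restrict W).Nondegenerate ∧ ∀ v ∈ W, B v v = 0 → v = 0

section Geom

variable {F V : Type*} [Field F] [AddCommGroup V] [Module F V]

lemma aniso_of_not_isSquare (B : LinearMap.BilinForm F V)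
    (hsymm' : ∀ x y : V, B x y = B y x) {p x : V} (hp : B p p ≠ 0)
    (hns : ¬ IsSquare ((B p x) ^ 2 - B p p * B x x)) :
    ∀ v ∈ Submodule.span F {p, x}, B v v = 0 → v = 0 := by
  intro v hv hv0
  obtain ⟨a, b, rfl⟩ := Submodule.mem_span_pair.mp hv
  have hxp : B x p = B p x := hsymm' x p
  have hv0' : a * a * B p p + 2 * (a * b) * B p x + b * b * B x x = 0 := by
    simp only [map_add, map_smul, LinearMap.add_apply, LinearMap.smul_apply,
      smul_eq_mul] at hv0
    linear_combination hv0 - a * b * hxp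
  by_cases hb : b = 0
  · subst hb
    have ha : a = 0 := by
      have h' : a * a * B p p = 0 := by linear_combination hv0'
      rcases mul_eq_zero.mp h' with h | h
      · rcases mul_eq_zero.mp h with h | h <;> exact h
      · exact absurd h hp
    simp [ha]
  · exfalso
    apply hns
    refine ⟨(a * B p p + b * B p x) / b, ?_⟩
    field_simp
    linear_combination - B p p * hv0'

lemma build_elliptic [FiniteDimensional F V] (B : LinearMap.BilinForm F V)
    (hsymm' : ∀ x y : V, B x y = B y x) {p x : V} {l : Submodule F V}
    (hp : B p p ≠ 0) (hpl : p ∉ l) (hxl : x ∈ l) (hx0 : x ≠ 0)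
    (hns : ¬ IsSquare ((B p x) ^ 2 - B p p * B x x)) :
    p ∈ Submodule.span F {p, x} ∧ IsEllipticLine B (Submodule.span F {p, x}) ∧
      Submodule.span F {p, x} ⊓ l = Submodule.span F {x} := by
  have hpmem : p ∈ Submodule.span F ({p, x} : Set V) :=
    Submodule.subset_span (by simp)
  have hxmem : x ∈ Submodule.span F ({p, x} : Set V) :=
    Submodule.subset_span (by simp)
  have hli : LinearIndependent F ![p, x] := by
    rw [LinearIndependent.pair_iff]
    intro s t hst
    by_cases hs : s = 0
    · subst hs
      rw [zero_smul, zero_add] at hst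
      rcases smul_eq_zero.mp hst with h | h
      · exact ⟨rfl, h⟩
      · exact absurd h hx0
    · exfalso
      apply hpl
      have h1 : s • p = -(t • x) := by
        rw [eq_neg_iff_add_eq_zero]; exact hst
      have h2 : p = (-(s⁻¹ * t)) • x := by
        calc p = s⁻¹ • (s • p) := by rw [smul_smul, inv_mul_cancel₀ hs, one_smul]
        _ = (-(s⁻¹ * t)) • x := by rw [h1, smul_neg, smul_smul, ← neg_smul]
      rw [h2]
      exact l.smul_mem _ hxl
  have hrange : Set.range ![p, x] = {p, x} := by
    simp only [Matrix.range_cons, Matrix.range_empty, Set.union_empty, Set.union_singleton]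
    exact Set.pair_comm x p
  have hfr : finrank F (Submodule.span F ({p, x} : Set V)) = 2 := by
    have h := finrank_span_eq_card hli
    rwa [hrange, Fintype.card_fin] at h
  have haniso := aniso_of_not_isSquare (F := F) B hsymm' hp hns
  have hnd : (B.restrict (Submodule.span F ({p, x} : Set V))).Nondegenerate := by
    constructor
    all_goals
      intro m hm
      obtain ⟨v, hv⟩ := m
      have h' := hm ⟨v, hv⟩
      simp only [LinearMap.BilinForm.restrict_apply] at h'
      exact Subtype.ext (haniso v hv h')
  refine ⟨hpmem, ⟨hfr, hnd, haniso⟩, ?_⟩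
  have hxspan_le : Submodule.span F {x} ≤ Submodule.span F ({p, x} : Set V) ⊓ l :=
    le_inf (Submodule.span_mono (by simp)) ((Submodule.span_le).mpr (by simp [hxl]))
  have hfr_inf_le : finrank F (Submodule.span F ({p, x} : Set V) ⊓ l : Submodule F V) ≤ 1 := by
    by_contra hcon
    push_neg at hcon
    have heq : Submodule.span F ({p, x} : Set V) ⊓ l = Submodule.span F ({p, x} : Set V) :=
      Submodule.eq_of_le_of_finrank_le inf_le_left (by rw [hfr]; exact hcon)
    have hple : p ∈ Submodule.span F ({p, x} : Set V) ⊓ l := by rw [heq]; exact hpmem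
    exact hpl hple.2
  exact (Submodule.eq_of_le_of_finrank_le hxspan_le
    (by rw [finrank_span_singleton hx0]; exact hfr_inf_le)).symm

end Geom

/-- Over `F_q` (`q` odd), in a space of dimension at least 3 with a nondegenerate
symmetric bilinear form: if `⟨p⟩` is a nondegenerate point and `l` an elliptic line
with `⟨p⟩ + l` a nondegenerate 3-space, then at least `(q-1)/2` elliptic lines
through `⟨p⟩` meet `l` in a (nondegenerate) point. -/
theorem elliptic_lines_through_point_meeting_elliptic_line
    {F V : Type*} [Field F] [Fintype F] [AddCommGroup V] [Module F V]
    (q : ℕ) (hq : Fintype.card F = q) (hodd : Odd q) (hdim : 3 ≤ finrank F V)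
    (B : LinearMap.BilinForm F V) (hsymm : B.IsSymm) (hB : B.Nondegenerate)
    (p : V) (hp : B p p ≠ 0)
    (l : Submodule F V) (hl : IsEllipticLine B l)
    (h3 : finrank F (Submodule.span F {p} ⊔ l : Submodule F V) = 3)
    (hnd : (B.restrict (Submodule.span F {p} ⊔ l)).Nondegenerate) :
    (q - 1) / 2 ≤ Set.ncard {m : Submodule F V | p ∈ m ∧ IsEllipticLine B m ∧
      finrank F (m ⊓ l : Submodule F V) = 1 ∧ (B.restrict (m ⊓ l)).Nondegenerate} := by
  classical
  haveI : FiniteDimensional F V := FiniteDimensional.of_finrank_pos (by omega)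
  haveI : Finite V := Module.finite_of_finite F
  haveI : Finite (Submodule F V) :=
    Finite.of_injective (fun m : Submodule F V => (m : Set V)) SetLike.coe_injective
  have hchar : ringChar F ≠ 2 := by
    intro h
    have h2 := FiniteField.even_card_of_char_two h
    rw [hq] at h2
    rcases hodd with ⟨k, hk⟩
    omega
  have hsymm' : ∀ x y : V, B x y = B y x := fun x y => by
    have := hsymm.eq x y; simpa using this
  have hl2 : finrank F l = 2 := hl.1
  have hlaniso : ∀ v ∈ l, B v v = 0 → v = 0 := hl.2.2
  set SS := {m : Submodule F V | p ∈ m ∧ IsEllipticLine B m ∧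
      finrank F (m ⊓ l : Submodule F V) = 1 ∧ (B.restrict (m ⊓ l)).Nondegenerate} with hSS
  set P : Submodule F V := Submodule.span F {p} ⊔ l with hPdef
  have hpl : p ∉ l := by
    intro hmem
    have hle : Submodule.span F {p} ≤ l := by rwa [Submodule.span_singleton_le_iff_mem]
    have hPeq : P = l := by rw [hPdef, sup_eq_right.mpr hle]
    rw [hPeq, hl2] at h3
    omega
  -- find e ∈ l with B p e = 0
  obtain ⟨e, hel, hpe, he0⟩ : ∃ e, e ∈ l ∧ B p e = 0 ∧ e ≠ 0 := by
    set φ : l →ₗ[F] F := (B p).comp l.subtype with hφ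
    have hrank : finrank F (LinearMap.range φ) + finrank F (LinearMap.ker φ) = 2 := by
      rw [LinearMap.finrank_range_add_finrank_ker]; exact hl2
    have hker_pos : LinearMap.ker φ ≠ ⊥ := by
      intro hbot
      rw [hbot, finrank_bot] at hrank
      have hle : finrank F (LinearMap.range φ) ≤ 1 := by
        have h := Submodule.finrank_le (LinearMap.range φ)
        simpa using h
      omega
    obtain ⟨ev, hevker, hev0⟩ := (Submodule.ne_bot_iff _).mp hker_pos
    refine ⟨(ev : V), ev.2, ?_, ?_⟩
    · have := LinearMap.mem_ker.mp hevker
      simpa [hφ] using this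
    · intro h
      exact hev0 (Subtype.ext h)
  have hBee : B e e ≠ 0 := fun h => he0 (hlaniso e hel h)
  -- find f making a basis of l
  obtain ⟨f, hfl, hfe⟩ : ∃ f ∈ l, f ∉ Submodule.span F {e} := by
    by_contra hcon
    push_neg at hcon
    have hle : l ≤ Submodule.span F {e} := hcon
    have h1 := Submodule.finrank_mono hle
    rw [hl2, finrank_span_singleton he0] at h1
    omega
  have hef_li : ∀ s t : F, s • e + t • f = 0 → s = 0 ∧ t = 0 := by
    intro s t hst
    by_cases ht : t = 0
    · subst ht
      rw [zero_smul, add_zero] at hst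
      rcases smul_eq_zero.mp hst with h | h
      · exact ⟨h, rfl⟩
      · exact absurd h he0
    · exfalso
      apply hfe
      have h1 : t • f = -(s • e) := by
        rw [eq_neg_iff_add_eq_zero, add_comm]; exact hst
      have h2 : f = (-(t⁻¹ * s)) • e := by
        calc f = t⁻¹ • (t • f) := by rw [smul_smul, inv_mul_cancel₀ ht, one_smul]
        _ = (-(t⁻¹ * s)) • e := by rw [h1, smul_neg, smul_smul, ← neg_smul]
      exact Submodule.mem_span_singleton.mpr ⟨-(t⁻¹ * s), h2.symm⟩
  have hli_ef : LinearIndependent F ![e, f] := LinearIndependent.pair_iff.mpr hef_li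
  have hspan_ef : Submodule.span F {e, f} = l := by
    apply Submodule.eq_of_le_of_finrank_le
    · rw [Submodule.span_le]
      intro z hz
      rcases hz with h | h
      · rw [h]; exact hel
      · rw [Set.mem_singleton_iff.mp h]; exact hfl
    · have h : finrank F (Submodule.span F ({e, f} : Set V)) = 2 := by
        have h := finrank_span_eq_card hli_ef
        have hr : Set.range ![e, f] = {e, f} := by
          simp only [Matrix.range_cons, Matrix.range_empty, Set.union_empty, Set.union_singleton]
          exact Set.pair_comm f e
        rwa [hr, Fintype.card_fin] at h
      rw [hl2, h]
  -- quadratic coefficients (raw)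
  have hA : (B p e) ^ 2 - B p p * B e e ≠ 0 := by
    rw [hpe]
    intro h
    exact (mul_ne_zero hp hBee) (by linear_combination -h)
  have hQt : ∀ t : F, (B p (t • e + f)) ^ 2 - B p p * B (t • e + f) (t • e + f)
      = ((B p e) ^ 2 - B p p * B e e) * t ^ 2
        + 2 * (B p e * B p f - B p p * B e f) * t
        + ((B p f) ^ 2 - B p p * B f f) := by
    intro t
    simp only [map_add, map_smul, LinearMap.add_apply, LinearMap.smul_apply, smul_eq_mul]
    linear_combination (B p p * t) * (hsymm' e f)
  -- discriminant nonzero via nondegeneracy of P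
  have hBbAC : (B p e * B p f - B p p * B e f) ^ 2
      - ((B p e) ^ 2 - B p p * B e e) * ((B p f) ^ 2 - B p p * B f f) ≠ 0 := by
    intro h0
    set u : V := ((B p e) ^ 2 - B p p * B e e) • f
      - (B p e * B p f - B p p * B e f) • e with hu
    have hul : u ∈ l := l.sub_mem (l.smul_mem _ hfl) (l.smul_mem _ hel)
    have hu0 : u ≠ 0 := by
      intro h
      rw [hu] at h
      have h' : (-(B p e * B p f - B p p * B e f)) • e
          + ((B p e) ^ 2 - B p p * B e e) • f = 0 := by
        rw [neg_smul]
        rw [sub_eq_add_neg, add_comm] at h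
        exact h
      exact hA (hef_li _ _ h').2
    set w : V := B p p • u - (B p u) • p with hw
    have hwp : B w p = 0 := by
      rw [hw]
      simp only [map_sub, map_smul, LinearMap.sub_apply, LinearMap.smul_apply, smul_eq_mul]
      linear_combination (B p p) * (hsymm' u p)
    have hwe : B w e = 0 := by
      rw [hw, hu]
      simp only [map_sub, map_smul, LinearMap.sub_apply, LinearMap.smul_apply, smul_eq_mul]
      linear_combination (B p p * ((B p e) ^ 2 - B p p * B e e)) * (hsymm' f e)
    have hwf : B w f = 0 := by
      rw [hw, hu]
      simp only [map_sub, map_smul, LinearMap.sub_apply, LinearMap.smul_apply, smul_eq_mul]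
      linear_combination h0
    have hw0 : w ≠ 0 := by
      intro h
      rw [hw] at h
      by_cases hbpu : B p u = 0
      · rw [hbpu, zero_smul, sub_zero] at h
        rcases smul_eq_zero.mp h with h' | h'
        · exact hp h'
        · exact hu0 h'
      · apply hpl
        have h1 : (B p u) • p = B p p • u := by
          rw [sub_eq_zero] at h; exact h.symm
        have h2 : p = ((B p u)⁻¹ * B p p) • u := by
          calc p = (B p u)⁻¹ • ((B p u) • p) := by
                rw [smul_smul, inv_mul_cancel₀ hbpu, one_smul]
          _ = ((B p u)⁻¹ * B p p) • u := by rw [h1, smul_smul]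
        rw [h2]
        exact l.smul_mem _ hul
    have hwP : w ∈ P := by
      rw [hw]
      apply Submodule.sub_mem
      · exact Submodule.smul_mem _ _ ((le_sup_right : l ≤ P) hul)
      · exact Submodule.smul_mem _ _
          ((le_sup_left : Submodule.span F {p} ≤ P) (Submodule.mem_span_singleton_self p))
    have hwrad : ∀ y ∈ P, B w y = 0 := by
      intro y hy
      obtain ⟨y1, hy1, y2, hy2, rfl⟩ := Submodule.mem_sup.mp hy
      obtain ⟨c, rfl⟩ := Submodule.mem_span_singleton.mp hy1
      rw [← hspan_ef] at hy2
      obtain ⟨s, t, rfl⟩ := Submodule.mem_span_pair.mp hy2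
      simp only [map_add, map_smul, smul_eq_mul]
      rw [hwp, hwe, hwf]
      ring
    have hz : (⟨w, hwP⟩ : P) = 0 := by
      apply hnd.1
      intro n
      have h := hwrad n n.2
      simpa [LinearMap.BilinForm.restrict_apply] using h
    exact hw0 (by simpa using congrArg Subtype.val hz)
  have hdisc : (2 * (B p e * B p f - B p p * B e f)) ^ 2
      - 4 * ((B p e) ^ 2 - B p p * B e e) * ((B p f) ^ 2 - B p p * B f f) ≠ 0 := by
    intro h
    apply hBbAC
    have h2 : (2 : F) ≠ 0 := Ring.two_ne_zero hchar
    have h4 : (4 : F) ≠ 0 := by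
      have h44 : (4 : F) = 2 * 2 := by norm_num
      rw [h44]; exact mul_ne_zero h2 h2
    have h' : (4 : F) * ((B p e * B p f - B p p * B e f) ^ 2
        - ((B p e) ^ 2 - B p p * B e e) * ((B p f) ^ 2 - B p p * B f f)) = 0 := by
      linear_combination h
    rcases mul_eq_zero.mp h' with h'' | h''
    · exact absurd h'' h4
    · exact h''
  -- counting
  have hcount := count_quadChar_neg_one (F := F) hchar hA hdisc
  rw [hq] at hcount
  set T : Finset F := Finset.univ.filter (fun t : F =>
    quadraticChar F (((B p e) ^ 2 - B p p * B e e) * t ^ 2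
      + 2 * (B p e * B p f - B p p * B e f) * t
      + ((B p f) ^ 2 - B p p * B f f)) = -1) with hT
  set Φ : F → Submodule F V := fun t => Submodule.span F {p, t • e + f} with hΦ
  have hx0t : ∀ t : F, t • e + f ≠ 0 := by
    intro t h
    have := hef_li t 1 (by rw [one_smul]; exact h)
    exact one_ne_zero this.2
  have hxtl : ∀ t : F, t • e + f ∈ l := fun t => l.add_mem (l.smul_mem _ hel) hfl
  have hbuild : ∀ t ∈ T, p ∈ Φ t ∧ IsEllipticLine B (Φ t) ∧
      Φ t ⊓ l = Submodule.span F {t • e + f} := by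
    intro t ht
    have hns : ¬ IsSquare ((B p (t • e + f)) ^ 2 - B p p * B (t • e + f) (t • e + f)) := by
      rw [hQt t]
      exact quadraticChar_neg_one_iff_not_isSquare.mp (Finset.mem_filter.mp ht).2
    exact build_elliptic B hsymm' hp hpl (hxtl t) (hx0t t) hns
  have hSmem : ∀ t ∈ T, Φ t ∈ SS := by
    intro t ht
    obtain ⟨h1, h2, h3'⟩ := hbuild t ht
    refine ⟨h1, h2, ?_, ?_⟩
    · rw [h3', finrank_span_singleton (hx0t t)]
    · rw [h3']
      constructor
      all_goals
        intro m hm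
        obtain ⟨v, hv⟩ := m
        have hv0 : B v v = 0 := by
          have h := hm ⟨v, hv⟩
          simpa [LinearMap.BilinForm.restrict_apply] using h
        have hvl : v ∈ l := by
          have hle : Submodule.span F ({t • e + f} : Set V) ≤ l := by
            rw [Submodule.span_le]; simp [hxtl t]
          exact hle hv
        exact Subtype.ext (hlaniso v hvl hv0)
  have hspan_eq_param : ∀ t s : F,
      Submodule.span F ({t • e + f} : Set V) = Submodule.span F {s • e + f} → t = s := by
    intro t s h3'
    have hmem : t • e + f ∈ Submodule.span F ({s • e + f} : Set V) := by
      rw [← h3']; exact Submodule.mem_span_singleton_self _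
    obtain ⟨c, hc⟩ := Submodule.mem_span_singleton.mp hmem
    have hc2 : (c * s) • e + c • f = t • e + f := by
      rw [← smul_smul, ← smul_add]; exact hc
    have h5 : (c * s - t) • e + (c - 1) • f = 0 := by
      calc (c * s - t) • e + (c - 1) • f
          = ((c * s) • e + c • f) - (t • e + f) := by
            rw [sub_smul, sub_smul, one_smul]; abel
        _ = 0 := by rw [hc2]; exact sub_self _
    obtain ⟨h6, h7⟩ := hef_li _ _ h5
    have hc1 : c = 1 := sub_eq_zero.mp h7
    rw [hc1, one_mul] at h6
    exact (sub_eq_zero.mp h6).symm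
  have hΦinj : ∀ t ∈ T, ∀ s ∈ T, Φ t = Φ s → t = s := by
    intro t ht s hs h
    have h1 := (hbuild t ht).2.2
    have h2 := (hbuild s hs).2.2
    rw [h] at h1
    exact hspan_eq_param t s (h1.symm.trans h2)
  set T' : Finset (Submodule F V) := T.image Φ with hT'
  have hcardT' : T'.card = T.card := by
    rw [hT']
    exact Finset.card_image_of_injOn (fun t ht s hs h =>
      hΦinj t (by simpa using ht) s (by simpa using hs) h)
  have hT'S : ↑T' ⊆ SS := by
    intro m hm
    simp only [hT', Finset.coe_image, Set.mem_image, Finset.mem_coe] at hm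
    obtain ⟨t, ht, rfl⟩ := hm
    exact hSmem t ht
  have hSSfin : SS.Finite := Set.toFinite _
  by_cases hqa : quadraticChar F ((B p e) ^ 2 - B p p * B e e) = -1
  · -- extra elliptic line through e
    have hnse : ¬ IsSquare ((B p e) ^ 2 - B p p * B e e) :=
      quadraticChar_neg_one_iff_not_isSquare.mp hqa
    have hnse' : ¬ IsSquare ((B p e) ^ 2 - B p p * B e e) := hnse
    have hbe := build_elliptic (l := l) B hsymm' hp hpl hel he0 hnse'
    have hme : Submodule.span F ({p, e} : Set V) ∈ SS := by
      refine ⟨hbe.1, hbe.2.1, ?_, ?_⟩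
      · rw [hbe.2.2, finrank_span_singleton he0]
      · rw [hbe.2.2]
        constructor
        all_goals
          intro m hm
          obtain ⟨v, hv⟩ := m
          have hv0 : B v v = 0 := by
            have h := hm ⟨v, hv⟩
            simpa [LinearMap.BilinForm.restrict_apply] using h
          have hvl : v ∈ l := by
            have hle : Submodule.span F ({e} : Set V) ≤ l := by
              rw [Submodule.span_le]; simp [hel]
            exact hle hv
          exact Subtype.ext (hlaniso v hvl hv0)
    have hnotmem : Submodule.span F ({p, e} : Set V) ∉ T' := by
      intro hmem
      rw [hT', Finset.mem_image] at hmem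
      obtain ⟨t, ht, hteq⟩ := hmem
      have h1 := (hbuild t ht).2.2
      rw [hteq] at h1
      have h2 := hbe.2.2
      have h3' : Submodule.span F ({e} : Set V) = Submodule.span F {t • e + f} :=
        h2.symm.trans h1
      have hmem2 : e ∈ Submodule.span F ({t • e + f} : Set V) := by
        rw [← h3']; exact Submodule.mem_span_singleton_self _
      obtain ⟨c, hc⟩ := Submodule.mem_span_singleton.mp hmem2
      have hc2 : (c * t) • e + c • f = e := by
        rw [← smul_smul, ← smul_add]; exact hc
      have h5 : (c * t - 1) • e + c • f = 0 := by
        calc (c * t - 1) • e + c • f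
            = ((c * t) • e + c • f) - e := by rw [sub_smul, one_smul]; abel
          _ = 0 := by rw [hc2]; exact sub_self _
      obtain ⟨h6, h7⟩ := hef_li _ _ h5
      rw [h7, zero_mul] at h6
      norm_num at h6
    have hle : T.card + 1 ≤ SS.ncard := by
      have hcardins : (insert (Submodule.span F ({p, e} : Set V)) T').card = T.card + 1 := by
        rw [Finset.card_insert_of_notMem hnotmem, hcardT']
      rw [← hcardins, ← Set.ncard_coe_finset]
      apply Set.ncard_le_ncard _ hSSfin
      rw [Finset.coe_insert]
      exact Set.insert_subset hme hT'S
    rw [if_pos hqa] at hcount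
    omega
  · have hle : T.card ≤ SS.ncard := by
      rw [← hcardT', ← Set.ncard_coe_finset]
      exact Set.ncard_le_ncard hT'S hSSfin
    rw [if_neg hqa] at hcount
    omega
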